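/- For a nonnegative integer m and real c, the function y(z) = z^{1-c} · L_m^{1-c}(z) solves the confluent hypergeometric equation z·y'' + (c - z)·y' - a·y = 0 with c - a = 1 + m, on the domain z > 0. -/

import Mathlib

/-- The generalized Laguerre polynomial L_m^α(x) = ∑_{k=0}^m (-1)^k/(k!(m-k)!) · (∏_{j=k+1}^m (α+j)) · x^k. -/
noncomputable def genLaguerre (m : ℕ) (α : ℝ) (x : ℝ) : ℝ :=
  ∑ k ∈ Finset.range (m + 1),
    ((-1 : ℝ) ^ k / ((Nat.factorial k : ℝ) * (Nat.factorial (m - k) : ℝ)))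
      * (∏ j ∈ Finset.Icc (k + 1) m, (α + (j : ℝ))) * x ^ k


open Polynomial Finset in
noncomputable def lc (m : ℕ) (α : ℝ) (k : ℕ) : ℝ :=
  if k ≤ m then ((-1 : ℝ) ^ k / ((Nat.factorial k : ℝ) * (Nat.factorial (m - k) : ℝ)))
      * (∏ j ∈ Finset.Icc (k + 1) m, (α + (j : ℝ))) else 0

lemma lc_rec (m : ℕ) (α : ℝ) (k : ℕ) :
    ((k : ℝ) + 1) * (α + (k : ℝ) + 1) * lc m α (k+1) + ((m : ℝ) - k) * lc m α k = 0 := by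
  unfold lc
  rcases le_or_gt (k+1) m with h | h
  · rw [if_pos h, if_pos (le_trans (Nat.le_succ k) h)]
    have hins : Finset.Icc (k+1) m = insert (k+1) (Finset.Icc (k+2) m) := by
      ext x; simp; omega
    rw [hins, Finset.prod_insert (by simp)]
    have hfac : m - k = (m - (k+1)) + 1 := by omega
    rw [hfac, Nat.factorial_succ, Nat.factorial_succ]
    have h1 : ((m - (k+1) : ℕ) : ℝ) = (m : ℝ) - k - 1 := by
      have : ((m - (k+1) : ℕ) : ℝ) = ((m : ℕ) : ℝ) - ((k+1 : ℕ) : ℝ) := by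
        rw [Nat.cast_sub h]
      push_cast at this ⊢; linarith
    have hk : (Nat.factorial k : ℝ) ≠ 0 := Nat.cast_ne_zero.2 (Nat.factorial_ne_zero k)
    have hmk : (Nat.factorial (m - (k+1)) : ℝ) ≠ 0 := Nat.cast_ne_zero.2 (Nat.factorial_ne_zero _)
    have hmk2 : (m : ℝ) - k ≠ 0 := by
      have : (k : ℝ) < m := by exact_mod_cast Nat.lt_of_succ_le h
      linarith
    push_cast [h1, sub_add_cancel]
    field_simp
    ring
  · rw [if_neg (by omega)]
    rcases le_or_gt k m with h2 | h2
    · have : k = m := by omega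
      subst this
      simp
    · rw [if_neg (by omega)]; ring

open Polynomial in
noncomputable def lagPoly (m : ℕ) (α : ℝ) : Polynomial ℝ :=
  ∑ k ∈ Finset.range (m + 1), C (lc m α k) * X ^ k

open Polynomial in
lemma lagPoly_coeff (m : ℕ) (α : ℝ) (n : ℕ) : (lagPoly m α).coeff n = lc m α n := by
  rw [lagPoly, finset_sum_coeff]
  simp only [coeff_C_mul, coeff_X_pow, mul_ite, mul_one, mul_zero]
  rw [Finset.sum_ite_eq (Finset.range (m+1)) n (lc m α)]
  by_cases h : n ∈ Finset.range (m+1)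
  · rw [if_pos h]
  · rw [if_neg h, lc, if_neg (by simp at h; omega)]

open Polynomial in
lemma lagPoly_eval (m : ℕ) (α : ℝ) (x : ℝ) : (lagPoly m α).eval x = genLaguerre m α x := by
  rw [lagPoly, genLaguerre, eval_finset_sum]
  refine Finset.sum_congr rfl fun k hk => ?_
  simp at hk
  rw [lc, if_pos (by omega), eval_mul, eval_C, eval_pow, eval_X]

open Polynomial in
lemma lagPoly_ode (m : ℕ) (α : ℝ) :
    X * derivative (derivative (lagPoly m α)) + C (α + 1) * derivative (lagPoly m α)
      - X * derivative (lagPoly m α) + C (m : ℝ) * lagPoly m α = 0 := by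
  ext n
  simp only [coeff_add, coeff_sub, coeff_C_mul, coeff_zero]
  cases n with
  | zero =>
    simp only [mul_coeff_zero, coeff_X_zero, zero_mul, coeff_derivative, lagPoly_coeff]
    have := lc_rec m α 0
    push_cast at this ⊢
    linarith
  | succ n =>
    rw [coeff_X_mul, coeff_X_mul, coeff_derivative, coeff_derivative, coeff_derivative]
    simp only [lagPoly_coeff]
    have h1 := lc_rec m α (n+1)
    push_cast at h1 ⊢
    linear_combination h1

/-- y(z) = z^{1-c} · L_m^{1-c}(z) solves z·y'' + (c-z)·y' - a·y = 0 with
c - a = 1 + m, i.e. a = c - 1 - m, on the domain z > 0. -/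
theorem power_laguerre_solves_chg (m : ℕ) (c : ℝ)
    (y : ℝ → ℝ) (hy : y = fun z => z ^ (1 - c) * genLaguerre m (1 - c) z) :
    ∀ z : ℝ, 0 < z →
      z * deriv (deriv y) z + (c - z) * deriv y z - (c - 1 - (m : ℝ)) * y z = 0 := by
  intro z hz
  set P := lagPoly m (1 - c) with hP
  have hyP : y = fun z => z ^ (1 - c) * P.eval z := by
    rw [hy]; funext x; rw [lagPoly_eval]
  set Q := Polynomial.derivative P with hQ
  set R := Polynomial.derivative Q with hR
  set g1 : ℝ → ℝ := fun x => (1 - c) * x ^ (1 - c - 1) * P.eval x + x ^ (1 - c) * Q.eval x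
    with hg1
  have hd1 : ∀ x : ℝ, 0 < x → HasDerivAt y (g1 x) x := by
    intro x hx
    rw [hyP]
    exact (Real.hasDerivAt_rpow_const (Or.inl hx.ne')).mul (P.hasDerivAt x)
  have hderiv1 : ∀ x : ℝ, 0 < x → deriv y x = g1 x := fun x hx => (hd1 x hx).deriv
  set g2 : ℝ := (1 - c) * ((1 - c - 1) * z ^ (1 - c - 1 - 1)) * P.eval z
      + (1 - c) * z ^ (1 - c - 1) * Q.eval z
      + ((1 - c) * z ^ (1 - c - 1) * Q.eval z + z ^ (1 - c) * R.eval z) with hg2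
  have hd2 : HasDerivAt g1 g2 z := by
    have t1 : HasDerivAt (fun x : ℝ => (1 - c) * x ^ (1 - c - 1) * P.eval x)
        ((1 - c) * ((1 - c - 1) * z ^ (1 - c - 1 - 1)) * P.eval z
          + (1 - c) * z ^ (1 - c - 1) * Q.eval z) z := by
      exact ((Real.hasDerivAt_rpow_const (Or.inl hz.ne')).const_mul (1 - c)).mul
        (P.hasDerivAt z)
    have t2 : HasDerivAt (fun x : ℝ => x ^ (1 - c) * Q.eval x)
        ((1 - c) * z ^ (1 - c - 1) * Q.eval z + z ^ (1 - c) * R.eval z) z :=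
      (Real.hasDerivAt_rpow_const (Or.inl hz.ne')).mul (Q.hasDerivAt z)
    exact t1.add t2
  have hE : deriv y =ᶠ[nhds z] g1 := by
    filter_upwards [isOpen_Ioi.mem_nhds (Set.mem_Ioi.2 hz)] with x hx
    exact hderiv1 x hx
  have h2 : deriv (deriv y) z = g2 := by
    rw [hE.deriv_eq]; exact hd2.deriv
  rw [h2, hderiv1 z hz, hyP]
  simp only [hg1]
  have hODE : z * R.eval z + (1 - c + 1) * Q.eval z - z * Q.eval z
      + (m : ℝ) * P.eval z = 0 := by
    have := congrArg (Polynomial.eval z) (lagPoly_ode m (1 - c))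
    simpa [hQ, hR, hP, mul_comm] using this
  have e1 : z ^ (1 - c - 1) * z = z ^ (1 - c) := by
    rw [← Real.rpow_add_one hz.ne']; congr 1; ring
  have e2 : z ^ (1 - c - 1 - 1) * z = z ^ (1 - c - 1) := by
    rw [← Real.rpow_add_one hz.ne']; congr 1; ring
  linear_combination z ^ (1 - c) * hODE
    + (2 * (1 - c) * Q.eval z - (1 - c) * P.eval z) * e1
    + (-c * (1 - c) * P.eval z) * e2
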